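/- arXiv:1612.06246 — 3 statements merged into one kernel-verified Lean document; each statement's English description precedes it below -/
import Mathlib

section
/- Online Mirror Descent with time-varying log-barrier mirror maps ψ_t(p) = −∑_{i=1}^M (1/η_{t,i}) ln pᵢ on the probability simplex Δ_M, with nonnegative loss vectors ℓ_t, satisfies for every u ∈ Δ_M: ∑_{t=1}^T ⟨p_t − u, ℓ_t⟩ ≤ ∑_{t=1}^T (D_{ψ_t}(u, p_t) − D_{ψ_t}(u, p_{t+1})) + ∑_{t=1}^T ∑_{i=1}^M η_{t,i} p_{t,i}² ℓ_{t,i}², where D_ψ denotes the Bregman divergence of ψ and p_{t+1} = argmin_{p ∈ Δ_M} D_{ψ_t}(p, p̃_{t+1}) with ∇ψ_t(p̃_{t+1}) = ∇ψ_t(p_t) − ℓ_t. -/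
open Finset

/-- The probability simplex in `ℝ^M`. -/
def simplex (M : ℕ) : Set (Fin M → ℝ) :=
  {p | (∀ i, 0 ≤ p i) ∧ ∑ i, p i = 1}

/-- The log-barrier mirror map with per-coordinate learning rates. -/
noncomputable def logBarrier {M : ℕ} (η : Fin M → ℝ) (p : Fin M → ℝ) : ℝ :=
  -∑ i, (1 / η i) * Real.log (p i)

/-- Bregman divergence of the log-barrier mirror map (its gradient at `q` is
`i ↦ -1/(η i * q i)`). -/
noncomputable def logBarrierBregman {M : ℕ} (η : Fin M → ℝ) (p q : Fin M → ℝ) : ℝ :=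
  logBarrier η p - logBarrier η q - ∑ i, (-(1 / (η i * q i))) * (p i - q i)

/-- Scalar inequality: for `a ≥ 0`, `b > 0`, `a(1-b) - b + 1 + ln b ≤ a²`. -/
lemma omd_scalar_key (a b : ℝ) (ha : 0 ≤ a) (hb : 0 < b) :
    a * (1 - b) - b + 1 + Real.log b ≤ a ^ 2 := by
  have h1 : Real.log (b * (1 + a)) ≤ b * (1 + a) - 1 :=
    Real.log_le_sub_one_of_pos (by positivity)
  rw [Real.log_mul hb.ne' (by positivity)] at h1
  have h2 : Real.log ((1 + a)⁻¹) ≤ (1 + a)⁻¹ - 1 :=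
    Real.log_le_sub_one_of_pos (by positivity)
  rw [Real.log_inv] at h2
  have h3 : (0:ℝ) < 1 + a := by positivity
  have hc : (1 + a)⁻¹ * (1 + a) = 1 := inv_mul_cancel₀ h3.ne'
  have h6 := mul_le_mul_of_nonneg_right h2 h3.le
  have h4 : a - a ^ 2 ≤ Real.log (1 + a) := by
    nlinarith [h6, hc, Real.log_nonneg (by linarith : (1:ℝ) ≤ 1 + a)]
  linarith

/-- Per-coordinate local-norm bound. -/
lemma omd_coord_key (e x y l : ℝ) (he : 0 < e) (hx : 0 < x) (hy : 0 < y) (hl : 0 ≤ l) :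
    l * (x - y) ≤ (1 / e) * (Real.log x - Real.log y) + (1 / (e * x)) * (y - x)
      + e * x ^ 2 * l ^ 2 := by
  have hlog : Real.log x - Real.log y = -Real.log (y / x) := by
    rw [Real.log_div hy.ne' hx.ne']; ring
  rw [hlog]
  have hs := omd_scalar_key (e * x * l) (y / x) (by positivity) (by positivity)
  have hs' := mul_le_mul_of_nonneg_right hs (le_of_lt hx)
  have h2 : (e * x * l * (1 - y / x) - y / x + 1 + Real.log (y / x)) * x
      = e * x * l * (x - y) - y + x + Real.log (y / x) * x := by
    field_simp
    try ring
  rw [h2] at hs'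
  rw [← mul_le_mul_iff_right₀ (show (0:ℝ) < e * x by positivity)]
  have h1 : e * x * (1 / e * -Real.log (y / x) + 1 / (e * x) * (y - x) + e * x ^ 2 * l ^ 2)
      = -Real.log (y/x) * x + (y - x) + e^2 * x^3 * l^2 := by
    field_simp
    try ring
  rw [h1]
  nlinarith [hs']

/-- Sum representation of the Bregman divergence. -/
lemma omd_breg_rep {M : ℕ} (η q z : Fin M → ℝ) :
    logBarrierBregman η z q =
      ∑ i, ((1 / η i) * (Real.log (q i) - Real.log (z i)) + (1 / (η i * q i)) * (z i - q i)) := by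
  simp only [logBarrierBregman, logBarrier]
  rw [← Finset.sum_neg_distrib, ← Finset.sum_neg_distrib, ← Finset.sum_sub_distrib,
    ← Finset.sum_sub_distrib]
  exact Finset.sum_congr rfl fun i _ => by ring

/-- Variational inequality at the Bregman projection. -/
lemma omd_vi {M : ℕ} (η q y u : Fin M → ℝ) (hη : ∀ i, 0 < η i)
    (hy : ∀ i, 0 < y i) (hys : y ∈ simplex M) (hu : u ∈ simplex M)
    (hmin : ∀ z ∈ simplex M, logBarrierBregman η y q ≤ logBarrierBregman η z q) :
    0 ≤ ∑ i, (1 / (η i * q i) - 1 / (η i * y i)) * (u i - y i) := by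
  set d : Fin M → ℝ := fun i => u i - y i with hd
  set g : ℝ → ℝ := fun ε => ∑ i, ((1 / η i) * (Real.log (q i) - Real.log (y i + ε * d i))
      + (1 / (η i * q i)) * (y i + ε * d i - q i)) with hg
  have hderiv : HasDerivAt g (∑ i, (1 / (η i * q i) - 1 / (η i * y i)) * d i) 0 := by
    apply HasDerivAt.fun_sum
    intro i _
    have hlin : HasDerivAt (fun ε : ℝ => y i + ε * d i) (d i) 0 := by
      simpa using ((hasDerivAt_id (0:ℝ)).mul_const (d i)).const_add (y i)
    have hne : y i + 0 * d i ≠ 0 := by simpa using (hy i).ne'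
    have hlog := (hlin.log hne)
    have h1 : HasDerivAt (fun ε : ℝ => (1 / η i) * (Real.log (q i) - Real.log (y i + ε * d i)))
        ((1 / η i) * (-(d i / (y i + 0 * d i)))) 0 :=
      ((hlog.const_sub (Real.log (q i))).const_mul (1 / η i))
    have h2 : HasDerivAt (fun ε : ℝ => (1 / (η i * q i)) * (y i + ε * d i - q i))
        ((1 / (η i * q i)) * d i) 0 :=
      ((hlin.sub_const (q i)).const_mul (1 / (η i * q i)))
    have := h1.fun_add h2
    convert this using 1
    have hyne : y i ≠ 0 := (hy i).ne'
    have hene : η i ≠ 0 := (hη i).ne'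
    field_simp
    linear_combination (d i) * mul_inv_cancel₀ hyne
  have hmono : ∀ ε ∈ Set.Ioc (0:ℝ) 1, g 0 ≤ g ε := by
    intro ε hε
    have hz : (fun i => y i + ε * d i) ∈ simplex M := by
      constructor
      · intro i
        have := hys.1 i
        have := hu.1 i
        have h1 : y i + ε * d i = (1 - ε) * y i + ε * u i := by simp [hd]; ring
        have h2 : 0 ≤ y i + ε * d i := by rw [h1]; nlinarith [hε.1, hε.2]
        simpa using h2
      · have : ∑ i, (y i + ε * d i) = ∑ i, y i + ε * (∑ i, u i - ∑ i, y i) := by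
          rw [Finset.sum_add_distrib, ← Finset.mul_sum, Finset.sum_sub_distrib]
        rw [this, hys.2, hu.2]; ring
    have e1 : g ε = logBarrierBregman η (fun i => y i + ε * d i) q := (omd_breg_rep η q _).symm
    have e0 : g 0 = logBarrierBregman η y q := by
      rw [omd_breg_rep η q y]
      simp [hg]
    rw [e0, e1]
    exact hmin _ hz
  have hdw : HasDerivWithinAt g (∑ i, (1 / (η i * q i) - 1 / (η i * y i)) * d i)
      (Set.Ioi (0:ℝ)) 0 := hderiv.hasDerivWithinAt
  rw [hasDerivWithinAt_iff_tendsto_slope,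
    show Set.Ioi (0:ℝ) \ {0} = Set.Ioi 0 from Set.diff_singleton_eq_self (by simp)] at hdw
  have hslope : ∀ᶠ ε in nhdsWithin (0:ℝ) (Set.Ioi 0), 0 ≤ slope g 0 ε := by
    have hmem : Set.Ioo (0:ℝ) 1 ∈ nhdsWithin (0:ℝ) (Set.Ioi 0) := by
      apply mem_nhdsWithin.mpr
      exact ⟨Set.Iio 1, isOpen_Iio, by norm_num, by
        rintro x ⟨hx1, hx2⟩
        exact ⟨hx2, hx1⟩⟩
    filter_upwards [hmem] with ε hε
    have h0 : 0 < ε := hε.1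
    have hge := hmono ε ⟨hε.1, hε.2.le⟩
    rw [slope_def_field]
    apply div_nonneg (by linarith) (by linarith)
  exact ge_of_tendsto hdw hslope

theorem log_barrier_omd_regret (M T : ℕ)
    (η : Fin T → Fin M → ℝ) (hη : ∀ t i, 0 < η t i)
    (ℓ : Fin T → Fin M → ℝ) (hℓ : ∀ t i, 0 ≤ ℓ t i)
    (p : Fin (T + 1) → Fin M → ℝ)
    (hp : ∀ t, p t ∈ simplex M) (hppos : ∀ t i, 0 < p t i)
    (ptil : Fin T → Fin M → ℝ) (hptilpos : ∀ t i, 0 < ptil t i)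
    -- unconstrained mirror step: ∇ψ_t(p̃_{t+1}) = ∇ψ_t(p_t) − ℓ_t
    (hstep : ∀ (t : Fin T) i,
      -(1 / (η t i * ptil t i)) = -(1 / (η t i * p t.castSucc i)) - ℓ t i)
    -- Bregman projection: p_{t+1} = argmin over the simplex of D_{ψ_t}(·, p̃_{t+1})
    (hproj : ∀ (t : Fin T), ∀ q ∈ simplex M,
      logBarrierBregman (η t) (p t.succ) (ptil t) ≤ logBarrierBregman (η t) q (ptil t)) :
    ∀ u ∈ simplex M,
      ∑ t : Fin T, ∑ i, (p t.castSucc i - u i) * ℓ t i ≤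
        (∑ t : Fin T, (logBarrierBregman (η t) u (p t.castSucc)
            - logBarrierBregman (η t) u (p t.succ)))
        + ∑ t : Fin T, ∑ i, η t i * (p t.castSucc i) ^ 2 * (ℓ t i) ^ 2 := by
  intro u hu
  have key : ∀ t : Fin T,
      ∑ i, (p t.castSucc i - u i) * ℓ t i ≤
        (logBarrierBregman (η t) u (p t.castSucc) - logBarrierBregman (η t) u (p t.succ))
        + ∑ i, η t i * (p t.castSucc i) ^ 2 * (ℓ t i) ^ 2 := by
    intro t
    set x : Fin M → ℝ := p t.castSucc with hx
    set y : Fin M → ℝ := p t.succ with hy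
    have hxpos : ∀ i, 0 < x i := fun i => hppos t.castSucc i
    have hypos : ∀ i, 0 < y i := fun i => hppos t.succ i
    -- variational inequality
    have hVI := omd_vi (η t) (ptil t) y u (hη t) hypos (hp t.succ) hu (hproj t)
    -- substitute the mirror step
    have hVI2 : 0 ≤ ∑ i, (1 / (η t i * x i) + ℓ t i - 1 / (η t i * y i)) * (u i - y i) := by
      refine le_trans hVI (le_of_eq (Finset.sum_congr rfl fun i _ => ?_))
      have hs := hstep t i
      have : 1 / (η t i * ptil t i) = 1 / (η t i * x i) + ℓ t i := by linarith
      rw [this]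
    -- three-point difference identity
    have E1 : logBarrierBregman (η t) u x - logBarrierBregman (η t) u y
        = ∑ i, ((1 / η t i) * (Real.log (x i) - Real.log (y i))
            + (1 / (η t i * x i)) * (u i - x i) - (1 / (η t i * y i)) * (u i - y i)) := by
      rw [omd_breg_rep (η t) x u, omd_breg_rep (η t) y u, ← Finset.sum_sub_distrib]
      exact Finset.sum_congr rfl fun i _ => by ring
    -- per-coordinate inequality
    have coord : ∀ i ∈ Finset.univ, (x i - u i) * ℓ t i
        + (1 / (η t i * x i) + ℓ t i - 1 / (η t i * y i)) * (u i - y i)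
        ≤ ((1 / η t i) * (Real.log (x i) - Real.log (y i))
            + (1 / (η t i * x i)) * (u i - x i) - (1 / (η t i * y i)) * (u i - y i))
          + η t i * x i ^ 2 * ℓ t i ^ 2 := by
      intro i _
      have hc := omd_coord_key (η t i) (x i) (y i) (ℓ t i) (hη t i) (hxpos i) (hypos i) (hℓ t i)
      nlinarith [hc]
    have hsum := Finset.sum_le_sum coord
    rw [Finset.sum_add_distrib, Finset.sum_add_distrib] at hsum
    have hsub : ∑ i, ((1 / η t i) * (Real.log (x i) - Real.log (y i))
            + (1 / (η t i * x i)) * (u i - x i) - (1 / (η t i * y i)) * (u i - y i))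
        = logBarrierBregman (η t) u x - logBarrierBregman (η t) u y := E1.symm
    linarith [hVI2, hsum, hsub.le, hsub.ge]
  calc ∑ t : Fin T, ∑ i, (p t.castSucc i - u i) * ℓ t i
      ≤ ∑ t : Fin T, ((logBarrierBregman (η t) u (p t.castSucc)
            - logBarrierBregman (η t) u (p t.succ))
          + ∑ i, η t i * (p t.castSucc i) ^ 2 * (ℓ t i) ^ 2) :=
        Finset.sum_le_sum fun t _ => key t
    _ = _ := Finset.sum_add_distrib
end

section
/- Let M ≥ 2, let p ∈ Δ_M have strictly positive coordinates, let ℓ ∈ R^M and η ∈ R_{>0}^M. Define F(λ) = ∑_{i=1}^M 1/(1/pᵢ + ηᵢ(ℓᵢ − λ)) wherever all denominators are positive. Then there exists λ ∈ [minᵢ ℓᵢ, maxᵢ ℓᵢ] such that F(λ) = 1, and the resulting vector q with 1/qᵢ = 1/pᵢ + ηᵢ(ℓᵢ − λ) lies in the probability simplex with strictly positive coordinates. -/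
open Finset

/-- Auxiliary lemma: if all denominators are positive at `c` and `F c ≥ 1`,
then by IVT on `[inf ℓ, c]` there is a root of `F = 1`. -/
theorem log_barrier_key (M : ℕ)
    (hne : (Finset.univ : Finset (Fin M)).Nonempty)
    (p ℓ η : Fin M → ℝ)
    (hppos : ∀ i, 0 < p i) (hpsum : ∑ i, p i = 1)
    (hη : ∀ i, 0 < η i) (c : ℝ)
    (hic : Finset.univ.inf' hne ℓ ≤ c)
    (hcs : c ≤ Finset.univ.sup' hne ℓ)
    (hpos : ∀ i, 0 < 1 / p i + η i * (ℓ i - c))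
    (hF : 1 ≤ ∑ i, (1 / p i + η i * (ℓ i - c))⁻¹) :
    ∃ lam ∈ Set.Icc (Finset.univ.inf' hne ℓ) (Finset.univ.sup' hne ℓ),
      (∀ i, 0 < 1 / p i + η i * (ℓ i - lam)) ∧
      (∑ i, (1 / p i + η i * (ℓ i - lam))⁻¹ = 1) ∧
      (∀ i, 0 < (1 / p i + η i * (ℓ i - lam))⁻¹) := by
  set a := Finset.univ.inf' hne ℓ with ha
  -- positivity of denominators on [a, c]
  have hposOn : ∀ x ∈ Set.Icc a c, ∀ i, 0 < 1 / p i + η i * (ℓ i - x) := by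
    intro x hx i
    have h1 : 1 / p i + η i * (ℓ i - c) ≤ 1 / p i + η i * (ℓ i - x) := by
      have := (hη i).le
      nlinarith [hx.2]
    linarith [hpos i]
  -- continuity of F on [a, c]
  have hcont : ContinuousOn (fun x => ∑ i, (1 / p i + η i * (ℓ i - x))⁻¹)
      (Set.Icc a c) := by
    apply continuousOn_finset_sum
    intro i _
    apply ContinuousOn.inv₀
    · fun_prop
    · intro x hx
      exact (hposOn x hx i).ne'
  -- F a ≤ 1
  have hFa : ∑ i, (1 / p i + η i * (ℓ i - a))⁻¹ ≤ 1 := by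
    calc ∑ i, (1 / p i + η i * (ℓ i - a))⁻¹ ≤ ∑ i, p i := by
          apply Finset.sum_le_sum
          intro i _
          have hai : a ≤ ℓ i := Finset.inf'_le _ (Finset.mem_univ i)
          have h1 : 1 / p i ≤ 1 / p i + η i * (ℓ i - a) := by
            nlinarith [(hη i).le]
          have h2 : 0 < 1 / p i := one_div_pos.mpr (hppos i)
          calc (1 / p i + η i * (ℓ i - a))⁻¹ ≤ (1 / p i)⁻¹ :=
                inv_anti₀ h2 h1
            _ = p i := by rw [one_div, inv_inv]
      _ = 1 := hpsum
  -- IVT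
  have hmem : (1 : ℝ) ∈ Set.Icc (∑ i, (1 / p i + η i * (ℓ i - a))⁻¹)
      (∑ i, (1 / p i + η i * (ℓ i - c))⁻¹) := ⟨hFa, hF⟩
  obtain ⟨lam, hlmem, hlam⟩ := intermediate_value_Icc hic hcont hmem
  refine ⟨lam, ⟨hlmem.1, le_trans hlmem.2 hcs⟩, hposOn lam hlmem, hlam, ?_⟩
  intro i
  exact inv_pos.mpr (hposOn lam hlmem i)

theorem log_barrier_projection_lambda (M : ℕ) (hM : 2 ≤ M)
    (hne : (Finset.univ : Finset (Fin M)).Nonempty)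
    (p ℓ η : Fin M → ℝ)
    (hppos : ∀ i, 0 < p i) (hpsum : ∑ i, p i = 1)
    (hη : ∀ i, 0 < η i) :
    ∃ lam ∈ Set.Icc (Finset.univ.inf' hne ℓ) (Finset.univ.sup' hne ℓ),
      (∀ i, 0 < 1 / p i + η i * (ℓ i - lam)) ∧
      (∑ i, (1 / p i + η i * (ℓ i - lam))⁻¹ = 1) ∧
      (∀ i, 0 < (1 / p i + η i * (ℓ i - lam))⁻¹) := by
  set a := Finset.univ.inf' hne ℓ with ha
  set b := Finset.univ.sup' hne ℓ with hb
  have hab : a ≤ b := by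
    obtain ⟨i, hi⟩ := hne
    exact le_trans (Finset.inf'_le _ (Finset.mem_univ i))
      (Finset.le_sup' _ (Finset.mem_univ i))
  by_cases hcase : ∀ i, 0 < 1 / p i + η i * (ℓ i - b)
  · -- F(b) ≥ 1 since each denominator ≤ 1/p i
    apply log_barrier_key M hne p ℓ η hppos hpsum hη b hab le_rfl hcase
    calc (1 : ℝ) = ∑ i, p i := hpsum.symm
      _ ≤ ∑ i, (1 / p i + η i * (ℓ i - b))⁻¹ := by
          apply Finset.sum_le_sum
          intro i _
          have hbi : ℓ i ≤ b := Finset.le_sup' _ (Finset.mem_univ i)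
          have h1 : 1 / p i + η i * (ℓ i - b) ≤ 1 / p i := by
            nlinarith [(hη i).le]
          calc p i = (1 / p i)⁻¹ := by rw [one_div, inv_inv]
            _ ≤ (1 / p i + η i * (ℓ i - b))⁻¹ := inv_anti₀ (hcase i) h1
  · -- some denominator is nonpositive at b; pick index minimizing ℓ i + (η i * p i)⁻¹
    push_neg at hcase
    obtain ⟨j', hj'⟩ := hcase
    obtain ⟨j, -, hjmin⟩ := Finset.exists_min_image Finset.univ
      (fun i => ℓ i + (η i * p i)⁻¹) hne
    set L : ℝ := ℓ j + (η j * p j)⁻¹ with hL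
    have hinvpos : ∀ i, 0 < (η i * p i)⁻¹ :=
      fun i => inv_pos.mpr (mul_pos (hη i) (hppos i))
    have haL : a < L := by
      have h0 : a ≤ ℓ j := Finset.inf'_le _ (Finset.mem_univ j)
      have := hinvpos j
      rw [hL]; linarith
    set δ : ℝ := min (η j)⁻¹ (L - a) with hδ
    have hδpos : 0 < δ := lt_min (inv_pos.mpr (hη j)) (by linarith)
    set c : ℝ := L - δ with hc
    have hacs : a ≤ c := by
      have : δ ≤ L - a := min_le_right _ _
      rw [hc]; linarith
    have hcL : c < L := by rw [hc]; linarith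
    -- L ≤ λ*_{j'} ≤ b
    have hLb : L ≤ b := by
      have h1 : L ≤ ℓ j' + (η j' * p j')⁻¹ := hjmin j' (Finset.mem_univ j')
      have h2 : ℓ j' + (η j' * p j')⁻¹ ≤ b := by
        have hη' := hη j'
        have h3 : 1 / p j' ≤ η j' * (b - ℓ j') := by linarith [hj']
        have h4 : (η j' * p j')⁻¹ ≤ b - ℓ j' := by
          rw [mul_inv, ← one_div (p j'), inv_mul_le_iff₀ hη']
          linarith
        linarith
      exact le_trans h1 h2
    have hcb : c ≤ b := le_trans hcL.le hLb
    -- positivity of denominators at c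
    have hposc : ∀ i, 0 < 1 / p i + η i * (ℓ i - c) := by
      intro i
      have h1 : c < ℓ i + (η i * p i)⁻¹ :=
        lt_of_lt_of_le hcL (hjmin i (Finset.mem_univ i))
      have hη' := hη i
      have h2 : 0 < η i * (ℓ i + (η i * p i)⁻¹ - c) := mul_pos hη' (by linarith)
      have h3 : η i * (η i * p i)⁻¹ = 1 / p i := by
        rw [mul_inv, ← mul_assoc, mul_inv_cancel₀ hη'.ne', one_mul, one_div]
      nlinarith [h2]
    apply log_barrier_key M hne p ℓ η hppos hpsum hη c hacs hcb hposc
    -- the j-th term alone is ≥ 1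
    have hdj : 1 / p j + η j * (ℓ j - c) = η j * δ := by
      have h3 : η j * (η j * p j)⁻¹ = 1 / p j := by
        rw [mul_inv, ← mul_assoc, mul_inv_cancel₀ (hη j).ne', one_mul, one_div]
      rw [hc, hL, mul_sub, mul_sub, mul_add, h3]
      ring
    have hjterm : (1 : ℝ) ≤ (1 / p j + η j * (ℓ j - c))⁻¹ := by
      rw [hdj]
      have h1 : η j * δ ≤ 1 := by
        have hm : δ ≤ (η j)⁻¹ := min_le_left _ _
        calc η j * δ ≤ η j * (η j)⁻¹ := by nlinarith [(hη j).le]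
          _ = 1 := mul_inv_cancel₀ (hη j).ne'
      have h2 : 0 < η j * δ := mul_pos (hη j) hδpos
      exact one_le_inv_iff₀.mpr ⟨h2, h1⟩
    calc (1 : ℝ) ≤ (1 / p j + η j * (ℓ j - c))⁻¹ := hjterm
      _ ≤ ∑ i, (1 / p i + η i * (ℓ i - c))⁻¹ :=
          Finset.single_le_sum (fun i _ => (inv_pos.mpr (hposc i)).le)
            (Finset.mem_univ j)
end

section
/- Let ψ be a differentiable strictly convex function on a convex open set containing a convex set K, and let q be arbitrary in the domain. If p* = argmin_{p ∈ K} D_ψ(p, q), then for every u ∈ K: D_ψ(u, q) ≥ D_ψ(u, p*) + D_ψ(p*, q) (generalized Pythagorean theorem for Bregman divergences). -/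
open RealInnerProductSpace

/-- Generalized Pythagorean theorem for Bregman divergences. -/
theorem bregman_generalized_pythagorean (n : ℕ)
    (ψ : EuclideanSpace ℝ (Fin n) → ℝ) (g : EuclideanSpace ℝ (Fin n) → EuclideanSpace ℝ (Fin n))
    (s K : Set (EuclideanSpace ℝ (Fin n)))
    (hso : IsOpen s) (hsc : Convex ℝ s) (hKs : K ⊆ s) (hKc : Convex ℝ K)
    (hstrict : StrictConvexOn ℝ s ψ)
    (hgrad : ∀ x ∈ s, HasGradientAt ψ (g x) x)
    (D : EuclideanSpace ℝ (Fin n) → EuclideanSpace ℝ (Fin n) → ℝ)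
    (hD : ∀ a b, D a b = ψ a - ψ b - ⟪g b, a - b⟫)
    (q : EuclideanSpace ℝ (Fin n)) (hq : q ∈ s)
    (pstar : EuclideanSpace ℝ (Fin n)) (hpstar : pstar ∈ K)
    (hmin : ∀ r ∈ K, D pstar q ≤ D r q) :
    ∀ u ∈ K, D u pstar + D pstar q ≤ D u q := by
  intro u hu
  set v : EuclideanSpace ℝ (Fin n) := u - pstar with hv
  have hps : pstar ∈ s := hKs hpstar
  -- the curve γ t = pstar + t • v
  set γ : ℝ → EuclideanSpace ℝ (Fin n) := fun t => pstar + t • v with hγdef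
  have hγ : ∀ t : ℝ, HasDerivAt γ v t := by
    intro t
    have h1 : HasDerivAt (fun t : ℝ => t • v) ((1 : ℝ) • v) t :=
      (hasDerivAt_id t).smul_const v
    have h2 := h1.const_add pstar
    rw [one_smul] at h2
    exact h2
  have hγ0 : γ 0 = pstar := by simp [hγdef]
  -- h t = D (γ t) q
  set h : ℝ → ℝ := fun t => ψ (γ t) - ψ q - ⟪g q, γ t - q⟫ with hhdef
  set c : ℝ := ⟪g pstar, v⟫ - ⟪g q, v⟫ with hc
  have hψγ : HasDerivAt (fun t : ℝ => ψ (γ t)) ⟪g pstar, v⟫ 0 := by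
    have hf := (hgrad pstar hps).hasFDerivAt
    rw [← hγ0] at hf
    have := hf.comp_hasDerivAt (f := γ) 0 (hγ 0)
    simp [hγ0] at this
    exact this
  have hinner : HasDerivAt (fun t : ℝ => ⟪g q, γ t - q⟫) ⟪g q, v⟫ 0 := by
    have := (hasDerivAt_const (0:ℝ) (g q)).inner ℝ ((hγ 0).sub_const q)
    simpa using this
  have hh : HasDerivAt h c 0 := by
    exact (hψγ.sub_const (ψ q)).sub hinner
  -- h t ≥ h 0 for t ∈ Ioc 0 1
  have hmono : ∀ t ∈ Set.Ioc (0:ℝ) 1, h 0 ≤ h t := by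
    intro t ht
    have hmem : γ t ∈ K := by
      have : γ t = (1 - t) • pstar + t • u := by
        simp [hγdef, hv, smul_sub, sub_smul]
        module
      rw [this]
      exact hKc hpstar hu (by linarith [ht.1, ht.2]) ht.1.le (by ring)
    have := hmin (γ t) hmem
    have e1 : h t = D (γ t) q := by rw [hhdef]; rw [hD]
    have e0 : h 0 = D pstar q := by rw [hhdef]; rw [hD]; simp [hγ0]
    rw [e1, e0]; exact this
  -- hence c ≥ 0
  have hc0 : 0 ≤ c := by
    have htend : Filter.Tendsto (slope h 0) (nhdsWithin 0 (Set.Ioi 0)) (nhds c) :=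
      (hasDerivAt_iff_tendsto_slope.mp hh).mono_left
        (nhdsWithin_mono _ (fun x hx => ne_of_gt hx))
    refine ge_of_tendsto htend ?_
    filter_upwards [Ioc_mem_nhdsGT_of_mem (Set.mem_Ico.mpr ⟨le_refl 0, one_pos⟩)] with t ht
    have h0t : h 0 ≤ h t := hmono t ht
    have hnn : 0 ≤ t⁻¹ * (h t - h 0) :=
      mul_nonneg (inv_nonneg.mpr ht.1.le) (by linarith)
    simpa [slope] using hnn
  -- conclude
  have expand : D u q - (D u pstar + D pstar q) = c := by
    simp only [hD, hc, hv]
    have e1 : u - q = (u - pstar) + (pstar - q) := by abel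
    rw [e1, inner_add_right]
    ring
  linarith
end
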